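/- Let q be a prime power and n ≥ 3. A coprime tuple (a_1,...,a_n) ∈ F_q[t]^n admits a balanced multiset of tuples (equivalently, is a Smyth tuple) if and only if: (i) for every i, deg(a_i) ≤ max_{j≠i} deg(a_j), and (ii) every irreducible polynomial p ∈ F_q[t] divides at most n-2 of the a_i. -/

import Mathlib

open scoped Classical
set_option maxHeartbeats 1600000
set_option synthInstance.maxHeartbeats 400000

/-- A balanced multiset of tuples with respect to coefficients `a : Fin n → K`. -/
def IsBalanced {K : Type*} [Field K] {n : ℕ} (a : Fin n → K)
    (S : Multiset (Fin n → K)) : Prop :=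
  S ≠ 0 ∧ (∀ v ∈ S, v ≠ 0 ∧ ∑ i, a i * v i = 0) ∧
    ∀ j k : Fin n, S.map (fun v => v j) = S.map (fun v => v k)

namespace SmythAux

open Polynomial

/-- A nonempty multiset has an element maximizing any function to a linear order. -/
lemma multiset_exists_max {α γ : Type*} [LinearOrder γ] (f : α → γ) (s : Multiset α)
    (hs : s ≠ 0) : ∃ x ∈ s, ∀ y ∈ s, f y ≤ f x := by
  induction s using Multiset.induction with
  | empty => exact absurd rfl hs
  | cons a t ih =>
    rcases eq_or_ne t 0 with rfl | ht
    · exact ⟨a, Multiset.mem_cons_self a 0, by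
        intro y hy
        rcases Multiset.mem_cons.mp hy with h | h
        · rw [h]
        · exact absurd h (Multiset.notMem_zero y)⟩
    · obtain ⟨x, hx, hmax⟩ := ih ht
      rcases le_total (f x) (f a) with h | h
      · refine ⟨a, Multiset.mem_cons_self a t, ?_⟩
        intro y hy
        rcases Multiset.mem_cons.mp hy with rfl | h'
        · exact le_rfl
        · exact le_trans (hmax y h') h
      · refine ⟨x, Multiset.mem_cons_of_mem hx, ?_⟩
        intro y hy
        rcases Multiset.mem_cons.mp hy with rfl | h'
        · exact h
        · exact hmax y h'

/-- From a multiset of rows satisfying the linear relation and having equal columns,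
    one gets a balanced multiset by discarding the zero rows. -/
lemma balanced_package {K : Type*} [Field K] {n : ℕ} (A : Fin n → K)
    (S₀ : Multiset (Fin n → K))
    (hrel : ∀ v ∈ S₀, ∑ i, A i * v i = 0)
    (hcols : ∀ j k : Fin n, S₀.map (fun v => v j) = S₀.map (fun v => v k))
    (hex : ∃ v ∈ S₀, v ≠ 0) :
    ∃ S, IsBalanced A S := by
  classical
  refine ⟨S₀.filter (fun v => v ≠ 0), ?_, ?_, ?_⟩
  · obtain ⟨v, hv, hvne⟩ := hex
    intro h0
    have hmem : v ∈ S₀.filter (fun v => v ≠ 0) := Multiset.mem_filter.mpr ⟨hv, hvne⟩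
    rw [h0] at hmem
    exact Multiset.notMem_zero v hmem
  · intro v hv
    have h := Multiset.mem_filter.mp hv
    exact ⟨h.2, hrel v h.1⟩
  · intro j k
    have hsplit := Multiset.filter_add_not (fun v => v ≠ 0) S₀
    set Sg := S₀.filter (fun v => v ≠ 0) with hSg
    set Sb := S₀.filter (fun v => ¬ v ≠ 0) with hSb
    have hbadcol : ∀ m : Fin n, Sb.map (fun v => v m)
        = Multiset.replicate (Multiset.card Sb) (0 : K) := by
      intro m
      have hz : ∀ v ∈ Sb, (fun v : Fin n → K => v m) v = (fun _ : Fin n → K => (0:K)) v := by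
        intro v hv
        have h := (Multiset.mem_filter.mp hv).2
        push_neg at h
        simp [h]
      rw [Multiset.map_congr rfl hz]
      exact Multiset.map_const Sb 0
    have hcolsplit : ∀ m : Fin n,
        Sg.map (fun v => v m) + Multiset.replicate (Multiset.card Sb) (0 : K)
          = S₀.map (fun v => v m) := by
      intro m
      rw [← hbadcol m, ← Multiset.map_add, hsplit]
    have h1 := hcolsplit j
    have h2 := hcolsplit k
    rw [hcols j k] at h1
    rw [← h2] at h1
    exact add_right_cancel h1

section Necessity

variable {F : Type*} [Field F]

/-- Clearing denominators: pointwise fact. -/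
lemma clear_denom_point (x : RatFunc F) (d : Polynomial F) (hdvd : x.denom ∣ d) :
    algebraMap (Polynomial F) (RatFunc F) ((x * algebraMap (Polynomial F) (RatFunc F) d).num)
      = x * algebraMap (Polynomial F) (RatFunc F) d := by
  obtain ⟨e, he⟩ := hdvd
  have hxde : x * algebraMap (Polynomial F) (RatFunc F) d
      = algebraMap (Polynomial F) (RatFunc F) (x.num * e) := by
    rw [he, map_mul, map_mul, ← mul_assoc]
    congr 1
    have hden : algebraMap (Polynomial F) (RatFunc F) x.denom ≠ 0 :=
      RatFunc.algebraMap_ne_zero (RatFunc.denom_ne_zero x)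
    have h := RatFunc.num_div_denom x
    rw [div_eq_iff hden] at h
    exact h.symm
  rw [hxde, RatFunc.num_algebraMap]

/-- Clearing denominators for a balanced multiset: we get a "polynomial balanced multiset". -/
lemma clear_denominators {n : ℕ} (a : Fin n → Polynomial F)
    (S : Multiset (Fin n → RatFunc F))
    (hS : IsBalanced (fun i => algebraMap (Polynomial F) (RatFunc F) (a i)) S) :
    ∃ T : Multiset (Fin n → Polynomial F),
      T ≠ 0 ∧ (∀ w ∈ T, w ≠ 0 ∧ ∑ i, a i * w i = 0) ∧
      (∀ j k : Fin n, T.map (fun w => w j) = T.map (fun w => w k)) := by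
  classical
  obtain ⟨hSne, hrows, hcols⟩ := hS
  set d : Polynomial F := (S.map (fun v => ∏ i, (v i).denom)).prod with hd
  have hdne : d ≠ 0 := by
    apply Multiset.prod_ne_zero
    intro h0
    obtain ⟨v, hv, hveq⟩ := Multiset.mem_map.mp h0
    exact Finset.prod_ne_zero_iff.mpr (fun i _ => RatFunc.denom_ne_zero (v i)) hveq
  have hdvd : ∀ v ∈ S, ∀ i : Fin n, (v i).denom ∣ d := by
    intro v hv i
    refine dvd_trans (Finset.dvd_prod_of_mem (fun i => (v i).denom) (Finset.mem_univ i)) ?_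
    exact Multiset.dvd_prod (Multiset.mem_map_of_mem _ hv)
  set dbar := algebraMap (Polynomial F) (RatFunc F) d with hdbar
  have hdbarne : dbar ≠ 0 := RatFunc.algebraMap_ne_zero hdne
  set φ : RatFunc F → Polynomial F := fun x => (x * dbar).num with hφ
  have hφ_eq : ∀ v ∈ S, ∀ i : Fin n,
      algebraMap (Polynomial F) (RatFunc F) (φ (v i)) = v i * dbar := by
    intro v hv i
    exact clear_denom_point (v i) d (hdvd v hv i)
  refine ⟨S.map (fun v => fun i => φ (v i)), ?_, ?_, ?_⟩
  · intro h0
    rw [Multiset.map_eq_zero] at h0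
    exact hSne h0
  · intro w hw
    obtain ⟨v, hv, hveq⟩ := Multiset.mem_map.mp hw
    constructor
    · obtain ⟨i, hi⟩ := Function.ne_iff.mp (hrows v hv).1
      intro h0
      apply hi
      have h1 : φ (v i) = 0 := by
        rw [← hveq] at h0
        exact congrFun h0 i
      have h2 := hφ_eq v hv i
      rw [h1, map_zero] at h2
      exact (mul_eq_zero.mp h2.symm).resolve_right hdbarne
    · have hinj := IsFractionRing.injective (Polynomial F) (RatFunc F)
      apply hinj
      rw [map_sum, map_zero]
      have : ∀ i : Fin n, algebraMap (Polynomial F) (RatFunc F) (a i * w i)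
          = (algebraMap (Polynomial F) (RatFunc F) (a i)) * (v i * dbar) := by
        intro i
        rw [map_mul]
        congr 1
        rw [← hveq]
        exact hφ_eq v hv i
      rw [Finset.sum_congr rfl (fun i _ => this i)]
      have hrel := (hrows v hv).2
      calc ∑ i : Fin n, (algebraMap (Polynomial F) (RatFunc F) (a i)) * (v i * dbar)
          = (∑ i : Fin n, (algebraMap (Polynomial F) (RatFunc F) (a i)) * v i) * dbar := by
            rw [Finset.sum_mul]; congr 1; ext i; ring
        _ = 0 := by rw [hrel, zero_mul]
  · intro j k
    rw [Multiset.map_map, Multiset.map_map]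
    have hj : ((fun w : Fin n → Polynomial F => w j) ∘ (fun v : Fin n → RatFunc F => fun i => φ (v i)))
        = φ ∘ (fun v : Fin n → RatFunc F => v j) := rfl
    have hk : ((fun w : Fin n → Polynomial F => w k) ∘ (fun v : Fin n → RatFunc F => fun i => φ (v i)))
        = φ ∘ (fun v : Fin n → RatFunc F => v k) := rfl
    rw [hj, hk, ← Multiset.map_map, ← Multiset.map_map, hcols j k]

end Necessity


section Necessity2

variable {F : Type*} [Field F]

lemma necessity_deg {n : ℕ} (a : Fin n → Polynomial F)
    (T : Multiset (Fin n → Polynomial F)) (hT : T ≠ 0)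
    (hrows : ∀ w ∈ T, w ≠ 0 ∧ ∑ i, a i * w i = 0)
    (hcols : ∀ j k : Fin n, T.map (fun w => w j) = T.map (fun w => w k))
    (i₀ : Fin n) :
    (a i₀).degree ≤ (Finset.univ.erase i₀).sup fun j => (a j).degree := by
  by_contra hlt
  push_neg at hlt
  obtain ⟨ws, hws, hmax⟩ := multiset_exists_max
    (fun w : Fin n → Polynomial F => (w i₀).degree) T hT
  set M := (ws i₀).degree with hM
  have hcolbound : ∀ w ∈ T, ∀ j : Fin n, (w j).degree ≤ M := by
    intro w hw j
    have hmem : w j ∈ T.map (fun w => w j) := Multiset.mem_map_of_mem _ hw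
    rw [hcols j i₀] at hmem
    obtain ⟨w', hw', hw'eq⟩ := Multiset.mem_map.mp hmem
    rw [← hw'eq]
    exact hmax w' hw'
  have hMne : M ≠ ⊥ := by
    obtain ⟨w, hw⟩ := Multiset.exists_mem_of_ne_zero hT
    obtain ⟨j, hj⟩ := Function.ne_iff.mp (hrows w hw).1
    have h1 : (w j).degree ≤ M := hcolbound w hw j
    intro hbot
    rw [hbot, le_bot_iff, Polynomial.degree_eq_bot] at h1
    exact hj h1
  have hrel := (hrows ws hws).2
  have hsum : a i₀ * ws i₀ = - ∑ j ∈ Finset.univ.erase i₀, a j * ws j := by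
    have h := Finset.sum_erase_add Finset.univ (fun i => a i * ws i) (Finset.mem_univ i₀)
    rw [hrel] at h
    exact eq_neg_of_add_eq_zero_right h
  have hdeg : (a i₀).degree + M ≤ ((Finset.univ.erase i₀).sup fun j => (a j).degree) + M := by
    calc (a i₀).degree + M = (a i₀ * ws i₀).degree := (Polynomial.degree_mul).symm
      _ = (- ∑ j ∈ Finset.univ.erase i₀, a j * ws j).degree := by rw [hsum]
      _ = (∑ j ∈ Finset.univ.erase i₀, a j * ws j).degree := Polynomial.degree_neg _
      _ ≤ (Finset.univ.erase i₀).sup (fun j => (a j * ws j).degree) :=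
          Polynomial.degree_sum_le _ _
      _ ≤ ((Finset.univ.erase i₀).sup fun j => (a j).degree) + M := by
          apply Finset.sup_le
          intro j hj
          rw [Polynomial.degree_mul]
          exact add_le_add (Finset.le_sup (f := fun j => (a j).degree) hj) (hcolbound ws hws j)
  exact absurd hdeg (not_le.mpr (WithBot.add_lt_add_right hMne hlt))

lemma necessity_div [Fintype F] {n : ℕ} (hn : 3 ≤ n) (a : Fin n → Polynomial F)
    (hcop : Ideal.span (Set.range a) = ⊤)
    (T : Multiset (Fin n → Polynomial F)) (hT : T ≠ 0)
    (hrows : ∀ w ∈ T, w ≠ 0 ∧ ∑ i, a i * w i = 0)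
    (hcols : ∀ j k : Fin n, T.map (fun w => w j) = T.map (fun w => w k))
    (p : Polynomial F) (hp : Irreducible p) :
    (Finset.univ.filter fun i => p ∣ a i).card ≤ n - 2 := by
  by_contra hcard
  push_neg at hcard
  have hnotall : ¬ ∀ i, p ∣ a i := by
    intro hall
    have hle : Ideal.span (Set.range a) ≤ Ideal.span {p} := by
      rw [Ideal.span_le]
      rintro x ⟨i, rfl⟩
      exact Ideal.mem_span_singleton.mpr (hall i)
    rw [hcop] at hle
    have h1 : (1 : Polynomial F) ∈ Ideal.span {p} := hle Submodule.mem_top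
    exact hp.not_isUnit (isUnit_of_dvd_one (Ideal.mem_span_singleton.mp h1))
  push_neg at hnotall
  obtain ⟨i₀, hi₀⟩ := hnotall
  have hsub : (Finset.univ.filter fun i => p ∣ a i) ⊆ Finset.univ.erase i₀ := by
    intro j hj
    rcases Finset.mem_filter.mp hj with ⟨-, hdvd⟩
    exact Finset.mem_erase.mpr ⟨fun h => hi₀ (h ▸ hdvd), Finset.mem_univ j⟩
  have hcard2 : (Finset.univ.erase i₀).card ≤ (Finset.univ.filter fun i => p ∣ a i).card := by
    rw [Finset.card_erase_of_mem (Finset.mem_univ i₀), Finset.card_univ, Fintype.card_fin]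
    omega
  have hfeq := Finset.eq_of_subset_of_card_le hsub hcard2
  have hdvdall : ∀ j : Fin n, j ≠ i₀ → p ∣ a j := by
    intro j hj
    have hmem : j ∈ Finset.univ.filter fun i => p ∣ a i := by
      rw [hfeq]; exact Finset.mem_erase.mpr ⟨hj, Finset.mem_univ j⟩
    exact (Finset.mem_filter.mp hmem).2
  set X := T.map (fun w => w i₀) with hX
  set g := X.gcd with hg
  have hgne : g ≠ 0 := by
    intro h0
    rw [hg, Multiset.gcd_eq_zero_iff] at h0
    obtain ⟨w, hw⟩ := Multiset.exists_mem_of_ne_zero hT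
    obtain ⟨j, hj⟩ := Function.ne_iff.mp (hrows w hw).1
    have hmem : w j ∈ T.map (fun w => w j) := Multiset.mem_map_of_mem _ hw
    rw [hcols j i₀] at hmem
    exact hj (h0 _ hmem)
  have hprime : Prime p := UniqueFactorizationMonoid.irreducible_iff_prime.mp hp
  have hpdeg : p.natDegree ≠ 0 := by
    intro h
    obtain ⟨c, hc⟩ := Polynomial.natDegree_eq_zero.mp h
    rcases eq_or_ne c 0 with rfl | hcne
    · rw [map_zero] at hc; exact hp.ne_zero hc.symm
    · exact hp.not_isUnit (hc ▸ Polynomial.isUnit_C.mpr (isUnit_iff_ne_zero.mpr hcne))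
  have hbound : ∀ k : ℕ, p ^ k ∣ g → k ≤ g.natDegree := by
    intro k hk
    have h1 := Polynomial.natDegree_le_of_dvd hk hgne
    rw [Polynomial.natDegree_pow] at h1
    have h2 : k ≤ k * p.natDegree := Nat.le_mul_of_pos_right k (Nat.pos_of_ne_zero hpdeg)
    omega
  set m := Nat.findGreatest (fun k => p ^ k ∣ g) g.natDegree with hm
  have hmdvd : p ^ m ∣ g := Nat.findGreatest_spec (P := fun k => p ^ k ∣ g) (Nat.zero_le _) (by show p ^ 0 ∣ g; rw [pow_zero]; exact one_dvd g)
  have hmnot : ¬ p ^ (m+1) ∣ g := by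
    intro hdvd
    have hle : m + 1 ≤ g.natDegree := hbound (m+1) hdvd
    exact Nat.findGreatest_is_greatest (Nat.lt_succ_self m) hle hdvd
  have hall : ∀ x ∈ X, p ^ (m+1) ∣ x := by
    intro x hx
    obtain ⟨w, hw, hweq⟩ := Multiset.mem_map.mp hx
    have hrel := (hrows w hw).2
    have hsum : a i₀ * w i₀ = - ∑ j ∈ Finset.univ.erase i₀, a j * w j := by
      have h := Finset.sum_erase_add Finset.univ (fun i => a i * w i) (Finset.mem_univ i₀)
      rw [hrel] at h
      exact eq_neg_of_add_eq_zero_right h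
    have hdvdsum : p ^ (m+1) ∣ a i₀ * w i₀ := by
      rw [hsum]
      apply dvd_neg.mpr
      apply Finset.dvd_sum
      intro j hj
      have hj' := (Finset.mem_erase.mp hj).1
      have h1 : p ∣ a j := hdvdall j hj'
      have h2 : p ^ m ∣ w j := by
        have hmem : w j ∈ T.map (fun w => w j) := Multiset.mem_map_of_mem _ hw
        rw [hcols j i₀] at hmem
        exact dvd_trans hmdvd (Multiset.gcd_dvd hmem)
      calc p ^ (m+1) = p * p ^ m := by ring
        _ ∣ a j * w j := mul_dvd_mul h1 h2
    rw [← hweq]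
    exact hprime.pow_dvd_of_dvd_mul_left (m+1) hi₀ hdvdsum
  exact hmnot (Multiset.dvd_gcd.mpr hall)

end Necessity2


section KeyLemma
variable {L : Type*} [Field L]

/-- Remainder modulo an arbitrary nonzero polynomial. -/
lemma exists_mod (f b : Polynomial L) (hb : b ≠ 0) :
    ∃ r, b ∣ (f - r) ∧ r.degree < b.degree := by
  set bm := b * C (b.leadingCoeff)⁻¹ with hbm
  have hmonic : bm.Monic := Polynomial.monic_mul_leadingCoeff_inv hb
  refine ⟨f %ₘ bm, ?_, ?_⟩
  · have h := Polynomial.modByMonic_eq_sub_mul_div f bm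
    have h2 : f - f %ₘ bm = bm * (f /ₘ bm) := by rw [h]; ring
    rw [h2, hbm, mul_assoc]
    exact Dvd.dvd.mul_right dvd_rfl _
  · have h := Polynomial.degree_modByMonic_lt f hmonic
    rwa [hbm, Polynomial.degree_mul_leadingCoeff_inv _ hb] at h

lemma isCoprime_of_isUnit_gcd {a c : Polynomial L} (h : IsUnit (gcd a c)) : IsCoprime a c := by
  rw [← EuclideanDomain.gcd_isUnit_iff]
  have h1 : EuclideanDomain.gcd a c ∣ gcd a c :=
    dvd_gcd (EuclideanDomain.gcd_dvd_left a c) (EuclideanDomain.gcd_dvd_right a c)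
  exact isUnit_of_dvd_unit h1 h

/-- Key lemma: the truncated ideal generated by a coprime family with degrees bounded by `D`
(attained) contains all polynomials of degree `< N + D` with coefficients of degree `< N`. -/
lemma key_lemma {ι : Type*} :
    ∀ (s : Finset ι) (b : ι → Polynomial L) (D N : ℕ),
    (∀ i ∈ s, b i ≠ 0) →
    (∀ i ∈ s, (b i).natDegree ≤ D) →
    (∃ i ∈ s, (b i).natDegree = D) →
    IsUnit (s.gcd b) →
    D < N →
    ∀ P : Polynomial L, P.degree < ((N + D : ℕ) : WithBot ℕ) →
    ∃ u : ι → Polynomial L, P = ∑ i ∈ s, b i * u i ∧ ∀ i, (u i).degree < (N : WithBot ℕ) := by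
  intro s
  induction s using Finset.strongInductionOn with
  | _ s ih =>
  intro b D N hne hdeg hatt hgcd hDN P hP
  obtain ⟨iatt, hiatt, hiattD⟩ := hatt
  have hsne : s.Nonempty := ⟨iatt, hiatt⟩
  obtain ⟨k, hk, hkmin⟩ := Finset.exists_min_image s (fun i => (b i).natDegree) hsne
  rcases eq_or_ne (s.erase k) ∅ with hbase | hstep
  · -- base case : s = {k}
    have hsk : s = {k} := by
      apply Finset.eq_singleton_iff_unique_mem.mpr
      refine ⟨hk, fun x hx => ?_⟩
      by_contra hxk
      exact (Finset.notMem_empty x) (hbase ▸ Finset.mem_erase.mpr ⟨hxk, hx⟩)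
    have hgcd' := hgcd
    rw [hsk, Finset.gcd_singleton] at hgcd'
    have hunit : IsUnit (b k) := (normalize_associated (b k)).isUnit hgcd'
    have hD0 : D = 0 := by
      have hik : iatt = k := by
        have h := hiatt; rw [hsk, Finset.mem_singleton] at h; exact h
      have h0 : (b k).natDegree = 0 := Polynomial.natDegree_eq_zero_of_isUnit hunit
      rw [hik] at hiattD
      omega
    obtain ⟨w, hw⟩ := hunit
    refine ⟨fun i => if i = k then ↑w⁻¹ * P else 0, ?_, ?_⟩
    · rw [hsk, Finset.sum_singleton]
      simp only [eq_self_iff_true, if_true]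
      rw [← hw, ← mul_assoc, Units.mul_inv, one_mul]
    · intro i
      dsimp only
      by_cases hik : i = k
      · rw [if_pos hik]
        have hdw : (↑w⁻¹ : Polynomial L).degree = 0 :=
          Polynomial.degree_eq_zero_of_isUnit w⁻¹.isUnit
        rw [Polynomial.degree_mul, hdw, zero_add]
        calc P.degree < ((N + D : ℕ) : WithBot ℕ) := hP
          _ = (N : WithBot ℕ) := by rw [hD0]; norm_num
      · rw [if_neg hik, Polynomial.degree_zero]
        exact WithBot.bot_lt_coe _
  · -- inductive step
    set s' := s.erase k with hs'
    have hs'sub : s' ⊂ s := Finset.erase_ssubset hk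
    have hs'ne : s'.Nonempty := Finset.nonempty_iff_ne_empty.mpr hstep
    set g' := s'.gcd b with hg'
    have hbmem : ∀ i ∈ s', b i ≠ 0 := fun i hi => hne i (Finset.mem_of_mem_erase hi)
    have hg'ne : g' ≠ 0 := by
      intro h0
      obtain ⟨j, hj⟩ := hs'ne
      exact hbmem j hj (Finset.gcd_eq_zero_iff.mp h0 j hj)
    have hcop : IsCoprime (b k) g' := by
      apply isCoprime_of_isUnit_gcd
      have h2 : s.gcd b = GCDMonoid.gcd (b k) g' := by
        conv_lhs => rw [← Finset.insert_erase hk]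
        rw [Finset.gcd_insert]
      exact h2 ▸ hgcd
    set b'' : ι → Polynomial L := fun i => b i / g' with hb''
    have hfac : ∀ i ∈ s', g' * b'' i = b i := fun i hi =>
      EuclideanDomain.mul_div_cancel' hg'ne (Finset.gcd_dvd hi)
    have hb''ne : ∀ i ∈ s', b'' i ≠ 0 := by
      intro i hi h0
      have h := hfac i hi
      rw [h0, mul_zero] at h
      exact hbmem i hi h.symm
    have hG'' : IsUnit (s'.gcd b'') := by
      by_contra hG
      have hG0 : s'.gcd b'' ≠ 0 := by
        intro h0
        obtain ⟨j, hj⟩ := hs'ne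
        exact hb''ne j hj (Finset.gcd_eq_zero_iff.mp h0 j hj)
      obtain ⟨q, hq, hqdvd⟩ := WfDvdMonoid.exists_irreducible_factor hG hG0
      have hqg : g' * q ∣ g' := by
        apply Finset.dvd_gcd
        intro i hi
        rw [← hfac i hi]
        exact mul_dvd_mul_left g' (dvd_trans hqdvd (Finset.gcd_dvd hi))
      have hq1 : q ∣ 1 := by
        have h2 : g' * q ∣ g' * 1 := by rwa [mul_one]
        exact (mul_dvd_mul_iff_left hg'ne).mp h2
      exact hq.not_isUnit (isUnit_of_dvd_one hq1)
    set dg := g'.natDegree with hdg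
    have hatt' : ∃ i ∈ s', (b i).natDegree = D := by
      rcases eq_or_ne iatt k with rfl | hne2
      · obtain ⟨j, hj⟩ := hs'ne
        refine ⟨j, hj, le_antisymm (hdeg j (Finset.mem_of_mem_erase hj)) ?_⟩
        calc D = (b iatt).natDegree := hiattD.symm
          _ ≤ (b j).natDegree := hkmin j (Finset.mem_of_mem_erase hj)
      · exact ⟨iatt, Finset.mem_erase.mpr ⟨hne2, hiatt⟩, hiattD⟩
    obtain ⟨i₀, hi₀s, hi₀D⟩ := hatt'
    have hdgle : dg ≤ D := by
      have h1 : dg ≤ (b i₀).natDegree :=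
        Polynomial.natDegree_le_of_dvd (Finset.gcd_dvd hi₀s) (hbmem i₀ hi₀s)
      omega
    have hsplitdeg : ∀ i ∈ s', (b i).natDegree = dg + (b'' i).natDegree := by
      intro i hi
      rw [← hfac i hi, Polynomial.natDegree_mul hg'ne (hb''ne i hi)]
    have hdeg'' : ∀ i ∈ s', (b'' i).natDegree ≤ D - dg := by
      intro i hi
      have h1 := hsplitdeg i hi
      have h2 := hdeg i (Finset.mem_of_mem_erase hi)
      omega
    have hatt'' : ∃ i ∈ s', (b'' i).natDegree = D - dg := by
      refine ⟨i₀, hi₀s, ?_⟩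
      have h1 := hsplitdeg i₀ hi₀s
      omega
    obtain ⟨x, y, hxy⟩ := hcop
    obtain ⟨uk, hukdvd, hukdeg⟩ := exists_mod (x * P) g' hg'ne
    have hdglt : (g'.degree : WithBot ℕ) < (N : WithBot ℕ) := by
      calc g'.degree ≤ (dg : WithBot ℕ) := Polynomial.degree_le_natDegree
        _ < (N : WithBot ℕ) := by exact_mod_cast lt_of_le_of_lt hdgle hDN
    have hukN : uk.degree < (N : WithBot ℕ) := lt_trans hukdeg hdglt
    have hdvdQ : g' ∣ P - b k * uk := by
      have heq : P - b k * uk = P * y * g' + b k * (x * P - uk) := by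
        linear_combination (-P) * hxy
      rw [heq]
      exact dvd_add (dvd_mul_left g' (P * y)) (Dvd.dvd.mul_left hukdvd (b k))
    set Q := (P - b k * uk) / g' with hQdef
    have hQfac : g' * Q = P - b k * uk := EuclideanDomain.mul_div_cancel' hg'ne hdvdQ
    have hQdeg : Q.degree < ((N + (D - dg) : ℕ) : WithBot ℕ) := by
      rcases eq_or_ne Q 0 with h0 | hQne
      · rw [h0, Polynomial.degree_zero]; exact WithBot.bot_lt_coe _
      · have h1 : (P - b k * uk).degree < ((N + D : ℕ) : WithBot ℕ) := by
          apply lt_of_le_of_lt (Polynomial.degree_sub_le _ _)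
          apply max_lt hP
          rcases eq_or_ne uk 0 with h0u | hune
          · rw [h0u, mul_zero, Polynomial.degree_zero]; exact WithBot.bot_lt_coe _
          · have hbkne : b k ≠ 0 := hne k hk
            rw [Polynomial.degree_mul, Polynomial.degree_eq_natDegree hbkne,
              Polynomial.degree_eq_natDegree hune]
            have hukdg : uk.natDegree < dg :=
              Polynomial.natDegree_lt_natDegree hune hukdeg
            have hbkD : (b k).natDegree ≤ D := hdeg k hk
            have : (b k).natDegree + uk.natDegree < N + D := by omega
            exact_mod_cast this
        have hPQne : P - b k * uk ≠ 0 := by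
          rw [← hQfac]
          exact mul_ne_zero hg'ne hQne
        rw [← hQfac, Polynomial.degree_mul, Polynomial.degree_eq_natDegree hg'ne,
          Polynomial.degree_eq_natDegree hQne] at h1
        rw [Polynomial.degree_eq_natDegree hQne]
        have h2 : dg + Q.natDegree < N + D := by exact_mod_cast h1
        have h3 : Q.natDegree < N + (D - dg) := by omega
        exact_mod_cast h3
    obtain ⟨u', hu'sum, hu'deg⟩ := ih s' hs'sub b'' (D - dg) N hb''ne hdeg'' hatt'' hG''
      (lt_of_le_of_lt (Nat.sub_le D dg) hDN) Q hQdeg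
    refine ⟨fun i => if i = k then uk else u' i, ?_, ?_⟩
    · conv_rhs => rw [← Finset.insert_erase hk]
      rw [Finset.sum_insert (Finset.notMem_erase k s)]
      simp only [eq_self_iff_true, if_true]
      have h2 : ∀ i ∈ s', b i * (if i = k then uk else u' i) = g' * (b'' i * u' i) := by
        intro i hi
        rw [if_neg (Finset.mem_erase.mp hi).1, ← hfac i hi, mul_assoc]
      rw [Finset.sum_congr rfl h2, ← Finset.mul_sum, ← hu'sum, hQfac]
      ring
    · intro i
      dsimp only
      by_cases hik : i = k
      · rw [if_pos hik]; exact hukN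
      · rw [if_neg hik]; exact hu'deg i


end KeyLemma

/-- Over a finite field, a vector avoiding `K < |L|` proper submodules exists. -/
lemma avoid_submodules {L : Type*} [Field L] [Fintype L] {V : Type*} [AddCommGroup V]
    [Module L V] [FiniteDimensional L V] {K : ℕ} (X : Fin K → Submodule L V)
    (hX : ∀ k, X k ≠ ⊤) (hcard : K < Fintype.card L) :
    ∃ v : V, ∀ k, v ∉ X k := by
  classical
  rcases Nat.eq_zero_or_pos K with hK | hK
  · subst hK; exact ⟨0, fun k => k.elim0⟩
  have : Finite V := Module.finite_of_finite L
  have : Fintype V := Fintype.ofFinite V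
  set d := Module.finrank L V with hd
  have hd1 : 1 ≤ d := by
    by_contra hlt
    push_neg at hlt
    interval_cases d
    · have hsub : Subsingleton V := by
        have h0 : Module.finrank L V = 0 := hd.symm
        exact Module.finrank_zero_iff.mp h0
      apply hX ⟨0, hK⟩
      ext x
      simp [Subsingleton.elim x 0]
  by_contra h
  push_neg at h
  have hcover : (Finset.univ : Finset V) ⊆
      Finset.univ.biUnion (fun k : Fin K => (X k : Set V).toFinset) := by
    intro v _
    obtain ⟨k, hk⟩ := h v
    exact Finset.mem_biUnion.mpr ⟨k, Finset.mem_univ k, Set.mem_toFinset.mpr hk⟩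
  have h1 : Fintype.card V ≤ ∑ k : Fin K, ((X k : Set V).toFinset).card := by
    rw [← Finset.card_univ]
    exact le_trans (Finset.card_le_card hcover) Finset.card_biUnion_le
  have h2 : ∀ k : Fin K, ((X k : Set V).toFinset).card ≤ Fintype.card L ^ (d - 1) := by
    intro k
    rw [Set.toFinset_card]
    have hcardk : Fintype.card (X k) = Fintype.card L ^ (Module.finrank L (X k)) := by
      have h := Module.card_fintype (Module.finBasis L (X k))
      rwa [Fintype.card_fin] at h
    have hrk : Module.finrank L (X k) < d :=
      Submodule.finrank_lt (hX k)
    calc Fintype.card (X k) = Fintype.card L ^ (Module.finrank L (X k)) := hcardk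
      _ ≤ Fintype.card L ^ (d - 1) := by
          apply Nat.pow_le_pow_right (Fintype.card_pos)
          omega
  have h3 : Fintype.card V = Fintype.card L ^ d := by
    have h := Module.card_fintype (Module.finBasis L V)
    rwa [Fintype.card_fin] at h
  have h4 : Fintype.card V ≤ K * Fintype.card L ^ (d - 1) := by
    calc Fintype.card V ≤ ∑ k : Fin K, ((X k : Set V).toFinset).card := h1
      _ ≤ ∑ _k : Fin K, Fintype.card L ^ (d - 1) := Finset.sum_le_sum (fun k _ => h2 k)
      _ = K * Fintype.card L ^ (d - 1) := by
          rw [Finset.sum_const, Finset.card_univ, Fintype.card_fin, smul_eq_mul]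
  have h5 : Fintype.card L ^ d = Fintype.card L * Fintype.card L ^ (d - 1) := by
    conv_lhs => rw [show d = 1 + (d - 1) by omega]
    rw [pow_add, pow_one]
  have h6 : K * Fintype.card L ^ (d - 1) < Fintype.card L * Fintype.card L ^ (d - 1) :=
    Nat.mul_lt_mul_of_lt_of_le hcard (le_refl _) (Nat.pow_pos Fintype.card_pos)
  omega

/-- Finitely many nonzero multilinear maps over a large finite field have a
common nonvanishing point. -/
lemma multilinear_generic {L : Type*} [Field L] [Fintype L] {V : Type*} [AddCommGroup V]
    [Module L V] [FiniteDimensional L V] {K : ℕ} :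
    ∀ (m : ℕ) (f : Fin K → MultilinearMap L (fun _ : Fin m => V) L),
    (∀ k, f k ≠ 0) → (K < Fintype.card L) →
    ∃ x : Fin m → V, ∀ k, f k x ≠ 0 := by
  intro m
  induction m with
  | zero =>
    intro f hf hcard
    refine ⟨fun i => i.elim0, fun k => ?_⟩
    intro h0
    apply hf k
    ext y
    have hy : y = (fun i => i.elim0) := funext (fun i => i.elim0)
    rw [hy]
    simpa using h0
  | succ m ihm =>
    intro f hf hcard
    set X : Fin K → Submodule L V := fun k => LinearMap.ker ((f k).curryLeft) with hX
    have hXne : ∀ k, X k ≠ ⊤ := by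
      intro k htop
      obtain ⟨x, hx⟩ : ∃ x, f k x ≠ 0 := by
        by_contra hall
        push_neg at hall
        exact hf k (MultilinearMap.ext hall)
      have hmem : x 0 ∈ X k := htop ▸ Submodule.mem_top
      have h1 : (f k).curryLeft (x 0) = 0 := LinearMap.mem_ker.mp hmem
      apply hx
      have h2 : f k x = ((f k).curryLeft (x 0)) (Fin.tail x) := by
        rw [MultilinearMap.curryLeft_apply, Fin.cons_self_tail]
      rw [h2, h1]
      rfl
    obtain ⟨v, hv⟩ := avoid_submodules X hXne hcard
    set f' : Fin K → MultilinearMap L (fun _ : Fin m => V) L :=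
      fun k => (f k).curryLeft v with hf'def
    have hf' : ∀ k, f' k ≠ 0 := fun k h0 => hv k (LinearMap.mem_ker.mpr h0)
    obtain ⟨x', hx'⟩ := ihm f' hf' hcard
    refine ⟨Fin.cons v x', fun k => ?_⟩
    have h3 : f k (Fin.cons v x') = f' k x' := (MultilinearMap.curryLeft_apply (f k) v x').symm
    rw [h3]
    exact hx' k


/-- From an invertible-matrix solution over the constants to a balanced multiset. -/
lemma construct_balanced {L : Type*} [Field L] [Fintype L] {n N : ℕ} (hn : 0 < n)
    (b : Fin n → Polynomial L)
    (T : Fin n → Matrix (Fin N) (Fin N) L) (hT : ∀ i, IsUnit (T i))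
    (v : Fin N → RatFunc L) (hv : v ≠ 0)
    (hrel : (∑ i, (algebraMap (Polynomial L) (RatFunc L) (b i)) •
        ((T i).map ((algebraMap (Polynomial L) (RatFunc L)).comp Polynomial.C))).mulVec v = 0) :
    ∃ S : Multiset (Fin n → RatFunc L),
      IsBalanced (fun i => algebraMap (Polynomial L) (RatFunc L) (b i)) S := by
  classical
  set ψ : Polynomial L →+* RatFunc L := algebraMap (Polynomial L) (RatFunc L) with hψ
  set ψc : L →+* RatFunc L := ψ.comp Polynomial.C with hψc
  set G := (Matrix (Fin N) (Fin N) L)ˣ with hG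
  set U : Fin n → G := fun i => (hT i).unit with hU
  set ρ : G →* Matrix (Fin N) (Fin N) (RatFunc L) :=
    (RingHom.mapMatrix ψc).toMonoidHom.comp (Units.coeHom _) with hρ
  set M : Matrix (Fin N) (Fin N) (RatFunc L) := ∑ i, (ψ (b i)) • ((T i).map ψc) with hM
  set u : MonoidAlgebra (RatFunc L) G := ∑ i, MonoidAlgebra.single (U i) (ψ (b i)) with hu
  have hρU : ∀ i, ρ (U i) = (T i).map ψc := by
    intro i
    show (RingHom.mapMatrix ψc) ((U i : Matrix (Fin N) (Fin N) L)) = _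
    rw [hU]
    simp only [IsUnit.unit_spec]
    rfl
  have hΦu : (MonoidAlgebra.lift (RatFunc L) (Matrix (Fin N) (Fin N) (RatFunc L)) G ρ) u = M := by
    rw [hu, map_sum]
    rw [hM]
    congr 1
    ext i : 1
    rw [MonoidAlgebra.lift_single, hρU]
  have hM0 : M.mulVec v = 0 := hrel
  have hnonunit : ¬ IsUnit u := by
    intro hun
    have hMu : IsUnit M := hΦu ▸ hun.map (MonoidAlgebra.lift (RatFunc L) (Matrix (Fin N) (Fin N) (RatFunc L)) G ρ)
    obtain ⟨Mu, hMueq⟩ := hMu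
    have hveq : v = 0 := by
      have h1 : ((Mu⁻¹ : (Matrix (Fin N) (Fin N) (RatFunc L))ˣ) : Matrix (Fin N) (Fin N) (RatFunc L)).mulVec
          (M.mulVec v) = v := by
        rw [Matrix.mulVec_mulVec, ← hMueq, Units.inv_mul, Matrix.one_mulVec]
      rw [hM0, Matrix.mulVec_zero] at h1
      exact h1.symm
    exact hv hveq
  -- finite dimensionality of the monoid algebra
  have hfd : FiniteDimensional (RatFunc L) (MonoidAlgebra (RatFunc L) G) := by
    have e := Finsupp.linearEquivFunOnFinite (RatFunc L) (RatFunc L) G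
    exact Module.Finite.equiv ((MonoidAlgebra.coeffLinearEquiv (RatFunc L)).trans e).symm
  -- get a zero divisor
  have hzd : ∃ z : MonoidAlgebra (RatFunc L) G, z ≠ 0 ∧ u * z = 0 := by
    by_cases hinj : Function.Injective (fun z : MonoidAlgebra (RatFunc L) G => u * z)
    · exfalso
      have hlin : Function.Injective (LinearMap.mulLeft (RatFunc L) u) := hinj
      have hsurj := (LinearMap.injective_iff_surjective (f := LinearMap.mulLeft (RatFunc L) u)).mp hlin
      obtain ⟨w, hw⟩ := hsurj 1
      have hw' : u * w = 1 := hw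
      have hwu : w * u = 1 := by
        have h2 : u * (w * u) = u * 1 := by
          rw [← mul_assoc, hw', one_mul, mul_one]
        exact hinj h2
      exact hnonunit ⟨⟨u, w, hw', hwu⟩, rfl⟩
    · rw [Function.not_injective_iff] at hinj
      obtain ⟨z1, z2, heq, hne⟩ := hinj
      refine ⟨z1 - z2, sub_ne_zero_of_ne hne, ?_⟩
      rw [mul_sub, heq, sub_self]
  obtain ⟨z, hzne, hz0⟩ := hzd
  -- build the multiset of rows
  set row : G → (Fin n → RatFunc L) := fun g i => z.coeff ((U i)⁻¹ * g) with hrow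
  set S₀ : Multiset (Fin n → RatFunc L) := (Finset.univ : Finset G).val.map row with hS₀
  apply balanced_package
  · -- rows satisfy the relation
    intro w hw
    obtain ⟨g, hg, hgeq⟩ := Multiset.mem_map.mp hw
    rw [← hgeq]
    have h1 : ∀ i : Fin n, (algebraMap (Polynomial L) (RatFunc L) (b i)) * row g i
        = (MonoidAlgebra.single (U i) (ψ (b i)) * z).coeff g := by
      intro i
      rw [MonoidAlgebra.coeff_single_mul_apply]
    calc ∑ i, (algebraMap (Polynomial L) (RatFunc L) (b i)) * row g i
        = ∑ i, (MonoidAlgebra.single (U i) (ψ (b i)) * z).coeff g :=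
          Finset.sum_congr rfl (fun i _ => h1 i)
      _ = (u * z).coeff g := by
          rw [hu, Finset.sum_mul, MonoidAlgebra.coeff_sum, Finsupp.finsetSum_apply]
      _ = 0 := by rw [hz0]; rfl
  · -- columns are equal
    intro j k
    have hcol : ∀ j : Fin n, S₀.map (fun w => w j) = (Finset.univ : Finset G).val.map (⇑z.coeff) := by
      intro j
      rw [hS₀, Multiset.map_map]
      have h1 : ((fun w : Fin n → RatFunc L => w j) ∘ row) = (⇑z.coeff) ∘ (fun g => (U j)⁻¹ * g) := rfl
      rw [h1]
      have h2 : (fun g : G => (U j)⁻¹ * g) = ⇑(Equiv.mulLeft ((U j)⁻¹)) := rfl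
      rw [h2, ← Multiset.map_map]
      congr 1
      have h3 := Finset.map_univ_equiv (Equiv.mulLeft ((U j)⁻¹))
      calc Multiset.map (⇑(Equiv.mulLeft ((U j)⁻¹))) Finset.univ.val
          = (Finset.map (Equiv.mulLeft ((U j)⁻¹)).toEmbedding Finset.univ).val := by
            rw [Finset.map_val]; rfl
        _ = Finset.univ.val := by rw [h3]
    rw [hcol j, hcol k]
  · -- a nonzero row exists
    obtain ⟨g₀, hg₀⟩ : ∃ g₀, z.coeff g₀ ≠ 0 := by
      by_contra hall
      push_neg at hall
      exact hzne (MonoidAlgebra.ext (Finsupp.ext hall))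
    set i₀ : Fin n := ⟨0, hn⟩
    refine ⟨row ((U i₀) * g₀), Multiset.mem_map_of_mem _ (Finset.mem_univ _), ?_⟩
    intro h0
    apply hg₀
    have h1 : row ((U i₀) * g₀) i₀ = z.coeff g₀ := by
      rw [hrow]
      simp only [inv_mul_cancel_left]
      exact congrArg z.coeff (inv_mul_cancel_left (U i₀) g₀)
    rw [← h1, h0]
    rfl


/-- The central construction. -/
lemma main_construction {L : Type*} [Field L] [Fintype L] {n : ℕ} (hn : 0 < n)
    (hcard : n < Fintype.card L)
    (b : Fin n → Polynomial L)
    (hI2 : ∀ p : Polynomial L, Irreducible p → ∃ i j : Fin n, i ≠ j ∧ ¬ p ∣ b i ∧ ¬ p ∣ b j)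
    (hI3 : ∀ i, (b i).degree ≤ (Finset.univ.erase i).sup fun j => (b j).degree) :
    ∃ S : Multiset (Fin n → RatFunc L),
      IsBalanced (fun i => algebraMap (Polynomial L) (RatFunc L) (b i)) S := by
  classical
  set D : ℕ := Finset.univ.sup (fun i => (b i).natDegree) with hD
  set N : ℕ := D + 1 with hN
  haveI hfd0 : FiniteDimensional L (Polynomial.degreeLT L N) :=
    Module.Finite.equiv (Polynomial.degreeLTEquiv L N).symm
  -- the ambient space of degree-bounded tuples
  set Φ : (Fin n → Polynomial.degreeLT L N) →ₗ[L] Polynomial L :=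
    ∑ i : Fin n, (LinearMap.mulLeft L (b i)).comp
      ((Polynomial.degreeLT L N).subtype.comp (LinearMap.proj i)) with hΦ
  have hΦapp : ∀ w : (Fin n → Polynomial.degreeLT L N),
      Φ w = ∑ i, b i * ((w i : Polynomial L)) := by
    intro w
    rw [hΦ, LinearMap.sum_apply]
    apply Finset.sum_congr rfl
    intro i _
    rfl
  set V : Submodule L (Fin n → Polynomial.degreeLT L N) := LinearMap.ker Φ with hV
  -- coefficient-extraction maps
  set g : Fin n → (V →ₗ[L] (Fin N → L)) := fun k => LinearMap.pi
    (fun c => (Polynomial.lcoeff L (c : ℕ)).comp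
      ((Polynomial.degreeLT L N).subtype.comp ((LinearMap.proj k).comp V.subtype))) with hg
  have hgapp : ∀ (k : Fin n) (x : V) (c : Fin N),
      g k x c = ((x : Fin n → Polynomial.degreeLT L N) k : Polynomial L).coeff (c : ℕ) := by
    intro k x c
    rfl
  set f : Fin n → MultilinearMap L (fun _ : Fin N => V) L :=
    fun k => ((Matrix.detRowAlternating).compLinearMap (g k)).toMultilinearMap with hf
  have hfapp : ∀ (k : Fin n) (x : Fin N → V),
      f k x = Matrix.det (Matrix.of (fun j => g k (x j))) := by
    intro k x
    rfl
  -- witnesses: each f k is nonzero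
  have hwitness : ∀ k : Fin n, ∃ x : Fin N → V, f k x ≠ 0 := by
    intro k
    set s : Finset (Fin n) := (Finset.univ.erase k).filter (fun i => b i ≠ 0) with hs
    have hsne : s.Nonempty := by
      obtain ⟨i, j, hij, hi, hj⟩ := hI2 Polynomial.X Polynomial.irreducible_X
      have hbi : b i ≠ 0 := fun h0 => hi (h0 ▸ dvd_zero _)
      have hbj : b j ≠ 0 := fun h0 => hj (h0 ▸ dvd_zero _)
      rcases eq_or_ne i k with rfl | hik
      · exact ⟨j, Finset.mem_filter.mpr ⟨Finset.mem_erase.mpr ⟨hij.symm, Finset.mem_univ j⟩, hbj⟩⟩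
      · exact ⟨i, Finset.mem_filter.mpr ⟨Finset.mem_erase.mpr ⟨hik, Finset.mem_univ i⟩, hbi⟩⟩
    have hsnz : ∀ i ∈ s, b i ≠ 0 := fun i hi => (Finset.mem_filter.mp hi).2
    have hsgcd : IsUnit (s.gcd b) := by
      by_contra hG
      have hG0 : s.gcd b ≠ 0 := by
        intro h0
        obtain ⟨i, hi⟩ := hsne
        exact hsnz i hi (Finset.gcd_eq_zero_iff.mp h0 i hi)
      obtain ⟨q, hq, hqdvd⟩ := WfDvdMonoid.exists_irreducible_factor hG hG0
      obtain ⟨i, j, hij, hi, hj⟩ := hI2 q hq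
      have hdvd : ∀ i : Fin n, i ≠ k → q ∣ b i := by
        intro i hik
        by_cases hbi : b i = 0
        · rw [hbi]; exact dvd_zero q
        · exact dvd_trans hqdvd (Finset.gcd_dvd
            (Finset.mem_filter.mpr ⟨Finset.mem_erase.mpr ⟨hik, Finset.mem_univ i⟩, hbi⟩))
      rcases eq_or_ne i k with rfl | hik
      · exact hj (hdvd j (Ne.symm hij))
      · exact hi (hdvd i hik)
    set Dk : ℕ := s.sup (fun i => (b i).natDegree) with hDk
    obtain ⟨i₀, hi₀, hi₀eq⟩ := Finset.exists_mem_eq_sup s hsne (fun i => (b i).natDegree)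
    have hDkD : Dk ≤ D := by
      apply Finset.sup_le
      intro i _
      exact Finset.le_sup (f := fun i => (b i).natDegree) (Finset.mem_univ i)
    have hDkN : Dk < N := by omega
    have hbk : (b k).natDegree ≤ Dk := by
      by_cases hbk0 : b k = 0
      · rw [hbk0, Polynomial.natDegree_zero]; exact Nat.zero_le _
      · rw [Polynomial.natDegree_le_iff_degree_le]
        calc (b k).degree ≤ (Finset.univ.erase k).sup (fun j => (b j).degree) := hI3 k
          _ ≤ (Dk : WithBot ℕ) := by
            apply Finset.sup_le
            intro i hi
            by_cases hbi : b i = 0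
            · rw [hbi, Polynomial.degree_zero]; exact bot_le
            · have : i ∈ s := Finset.mem_filter.mpr ⟨hi, hbi⟩
              calc (b i).degree ≤ ((b i).natDegree : WithBot ℕ) := Polynomial.degree_le_natDegree
                _ ≤ (Dk : WithBot ℕ) := by
                  exact_mod_cast Finset.le_sup (f := fun i => (b i).natDegree) this
    -- rows of the witness
    have hrows : ∀ j : Fin N, ∃ w : V,
        ((w : Fin n → Polynomial.degreeLT L N) k : Polynomial L) = Polynomial.X ^ (j : ℕ) := by
      intro j
      have hP : (-(b k * Polynomial.X ^ (j : ℕ))).degree < ((N + Dk : ℕ) : WithBot ℕ) := by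
        rw [Polynomial.degree_neg]
        by_cases hbk0 : b k = 0
        · rw [hbk0, zero_mul, Polynomial.degree_zero]; exact WithBot.bot_lt_coe _
        · rw [Polynomial.degree_mul, Polynomial.degree_eq_natDegree hbk0,
            Polynomial.degree_X_pow]
          have h1 : (b k).natDegree + (j : ℕ) < N + Dk := by
            have := j.isLt
            omega
          exact_mod_cast h1
      obtain ⟨u, hu, hudeg⟩ := key_lemma s b Dk N hsnz
        (fun i hi => Finset.le_sup (f := fun i => (b i).natDegree) hi)
        ⟨i₀, hi₀, hi₀eq.symm⟩ hsgcd hDkN (-(b k * Polynomial.X ^ (j : ℕ))) hP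
      -- assemble the row
      set base : Fin n → Polynomial.degreeLT L N := fun i =>
        if h2 : i ∈ s then ⟨u i, by rw [Polynomial.mem_degreeLT]; exact hudeg i⟩ else 0
        with hbasedef
      set row : Fin n → Polynomial.degreeLT L N := Function.update base k
        ⟨Polynomial.X ^ (j : ℕ), by
          rw [Polynomial.mem_degreeLT, Polynomial.degree_X_pow]
          exact_mod_cast j.isLt⟩ with hrowdef
      have hrowk : ((row k : Polynomial.degreeLT L N) : Polynomial L)
          = Polynomial.X ^ (j : ℕ) := by
        rw [hrowdef, Function.update_self]
      have hrowmem : row ∈ V := by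
        rw [hV, LinearMap.mem_ker, hΦapp]
        have hsplit := Finset.add_sum_erase Finset.univ
          (fun i => b i * ((row i : Polynomial.degreeLT L N) : Polynomial L)) (Finset.mem_univ k)
        rw [← hsplit]
        have hzero : ∀ i ∈ Finset.univ.erase k, i ∉ s →
            b i * ((row i : Polynomial.degreeLT L N) : Polynomial L) = 0 := by
          intro i hi hnotin
          have hbi : b i = 0 := by
            by_contra hbine
            exact hnotin (Finset.mem_filter.mpr ⟨hi, hbine⟩)
          rw [hbi, zero_mul]
        have herase : ∑ i ∈ Finset.univ.erase k,
            b i * ((row i : Polynomial.degreeLT L N) : Polynomial L) = ∑ i ∈ s, b i * u i := by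
          rw [← Finset.sum_subset (Finset.filter_subset _ _) hzero]
          apply Finset.sum_congr rfl
          intro i hi
          have hik : i ≠ k := (Finset.mem_erase.mp (Finset.filter_subset _ _ hi)).1
          rw [hrowdef, Function.update_of_ne hik, hbasedef]
          simp only [dif_pos (show i ∈ s from hi)]
        rw [hrowk, herase, ← hu]
        ring
      exact ⟨⟨row, hrowmem⟩, hrowk⟩
    choose xw hxw using hrows
    refine ⟨xw, ?_⟩
    rw [hfapp]
    have hmat : Matrix.of (fun j => g k (xw j)) = (1 : Matrix (Fin N) (Fin N) L) := by
      ext j c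
      rw [Matrix.of_apply, hgapp, hxw j, Polynomial.coeff_X_pow, Matrix.one_apply]
      by_cases hjc : j = c
      · subst hjc; simp
      · rw [if_neg hjc, if_neg (fun h => hjc (Fin.ext h).symm)]
    rw [hmat, Matrix.det_one]
    exact one_ne_zero
  -- generic common nonvanishing point
  have hfne : ∀ k, f k ≠ 0 := by
    intro k h0
    obtain ⟨x, hx⟩ := hwitness k
    apply hx
    rw [h0]
    rfl
  obtain ⟨x, hx⟩ := multilinear_generic (L := L) (V := ↥V) (K := n) N f hfne hcard
  -- the matrices
  set T : Fin n → Matrix (Fin N) (Fin N) L := fun i => Matrix.of (fun j => g i (x j)) with hT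
  have hTunit : ∀ i, IsUnit (T i) := by
    intro i
    rw [Matrix.isUnit_iff_isUnit_det]
    rw [isUnit_iff_ne_zero]
    have := hx i
    rw [hfapp] at this
    exact this
  -- the kernel vector
  set ψ : Polynomial L →+* RatFunc L := algebraMap (Polynomial L) (RatFunc L) with hψ
  set v : Fin N → RatFunc L := fun c => ψ (Polynomial.X ^ (c : ℕ)) with hv
  have hvne : v ≠ 0 := by
    intro h0
    have h1 : v ⟨0, by omega⟩ = 0 := by rw [h0]; rfl
    rw [hv] at h1
    simp only [Fin.val_mk, pow_zero, map_one] at h1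
    exact one_ne_zero h1
  have hrel : (∑ i, (ψ (b i)) • ((T i).map (ψ.comp Polynomial.C))).mulVec v = 0 := by
    funext j
    have hentry : ∀ c : Fin N,
        (∑ i, (ψ (b i)) • ((T i).map (ψ.comp Polynomial.C))) j c
          = ∑ i, ψ (b i) * (ψ.comp Polynomial.C) (T i j c) := by
      intro c
      rw [Matrix.sum_apply]
      apply Finset.sum_congr rfl
      intro i _
      rw [Matrix.smul_apply, Matrix.map_apply, smul_eq_mul]
    show ∑ c, (∑ i, (ψ (b i)) • ((T i).map (ψ.comp Polynomial.C))) j c * v c = 0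
    calc ∑ c, (∑ i, (ψ (b i)) • ((T i).map (ψ.comp Polynomial.C))) j c * v c
        = ∑ c, ∑ i, ψ (b i) * ((ψ.comp Polynomial.C) (T i j c) * v c) := by
          apply Finset.sum_congr rfl
          intro c _
          rw [hentry c, Finset.sum_mul]
          apply Finset.sum_congr rfl
          intro i _
          ring
      _ = ∑ i, ψ (b i) * (∑ c, (ψ.comp Polynomial.C) (T i j c) * v c) := by
          rw [Finset.sum_comm]
          apply Finset.sum_congr rfl
          intro i _
          rw [Finset.mul_sum]
      _ = ∑ i, ψ (b i) * ψ (((x j : Fin n → Polynomial.degreeLT L N) i : Polynomial L)) := by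
          apply Finset.sum_congr rfl
          intro i _
          congr 1
          set p : Polynomial L := ((x j : Fin n → Polynomial.degreeLT L N) i : Polynomial L)
            with hp
          have hTic : ∀ c : Fin N, T i j c = p.coeff (c : ℕ) := fun c => rfl
          have hpdeg : p.natDegree < N := by
            have hmem := ((x j : Fin n → Polynomial.degreeLT L N) i).2
            rw [Polynomial.mem_degreeLT] at hmem
            by_cases hp0 : p = 0
            · rw [hp0, Polynomial.natDegree_zero]; omega
            · exact (Polynomial.natDegree_lt_iff_degree_lt hp0).mpr hmem
          calc ∑ c, (ψ.comp Polynomial.C) (T i j c) * v c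
              = ∑ c : Fin N, ψ (Polynomial.monomial (c : ℕ) (p.coeff (c : ℕ))) := by
                apply Finset.sum_congr rfl
                intro c _
                rw [hTic c, hv]
                rw [RingHom.comp_apply, ← map_mul]
                congr 1
                rw [Polynomial.C_mul_X_pow_eq_monomial]
            _ = ψ (∑ c : Fin N, Polynomial.monomial (c : ℕ) (p.coeff (c : ℕ))) := by
                rw [map_sum]
            _ = ψ p := by
                congr 1
                rw [Fin.sum_univ_eq_sum_range (fun c => Polynomial.monomial c (p.coeff c)) N]
                exact (Polynomial.as_sum_range' p N hpdeg).symm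
      _ = ψ (∑ i, b i * ((x j : Fin n → Polynomial.degreeLT L N) i : Polynomial L)) := by
          rw [map_sum]
          apply Finset.sum_congr rfl
          intro i _
          rw [map_mul]
      _ = 0 := by
          rw [← hΦapp]
          have h0 : Φ ((x j : Fin n → Polynomial.degreeLT L N)) = 0 :=
            LinearMap.mem_ker.mp (x j).2
          rw [h0, map_zero]
  exact construct_balanced hn b T hTunit v hvne hrel


/-- Transport of the divisibility condition along a field extension. -/
lemma transport_I2 {F L : Type*} [Field F] [Field L] (φ : F →+* L) {n : ℕ}
    (a : Fin n → Polynomial F)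
    (hI2 : ∀ p : Polynomial F, Irreducible p → ∃ i j : Fin n, i ≠ j ∧ ¬ p ∣ a i ∧ ¬ p ∣ a j)
    (p : Polynomial L) (hp : Irreducible p) :
    ∃ i j : Fin n, i ≠ j ∧ ¬ p ∣ (a i).map φ ∧ ¬ p ∣ (a j).map φ := by
  classical
  set J : Ideal (Polynomial F) := Ideal.comap (Polynomial.mapRingHom φ) (Ideal.span {p}) with hJ
  have hmem : ∀ f : Polynomial F, f ∈ J ↔ p ∣ f.map φ := by
    intro f
    rw [hJ, Ideal.mem_comap, Ideal.mem_span_singleton, Polynomial.coe_mapRingHom]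
  have hpprime : Prime p := UniqueFactorizationMonoid.irreducible_iff_prime.mp hp
  have hspanprime : (Ideal.span {p}).IsPrime := (Ideal.span_singleton_prime hp.ne_zero).mpr hpprime
  have hJprime : J.IsPrime := Ideal.IsPrime.comap _
  rcases eq_or_ne J ⊥ with hbot | hne
  · obtain ⟨i, j, hij, hi, hj⟩ := hI2 Polynomial.X Polynomial.irreducible_X
    have hine : a i ≠ 0 := fun h => hi (h ▸ dvd_zero _)
    have hjne : a j ≠ 0 := fun h => hj (h ▸ dvd_zero _)
    refine ⟨i, j, hij, ?_, ?_⟩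
    · intro hdvd
      have hm : a i ∈ J := (hmem _).mpr hdvd
      rw [hbot] at hm
      exact hine (Ideal.mem_bot.mp hm)
    · intro hdvd
      have hm : a j ∈ J := (hmem _).mpr hdvd
      rw [hbot] at hm
      exact hjne (Ideal.mem_bot.mp hm)
  · obtain ⟨g, hg⟩ := (IsPrincipalIdealRing.principal J).principal
    have hg' : J = Ideal.span {g} := hg
    have hgne : g ≠ 0 := by
      intro h0
      rw [h0] at hg'
      apply hne
      rw [hg']
      exact Ideal.span_singleton_eq_bot.mpr rfl
    have hgprime : Prime g := by
      rw [← Ideal.span_singleton_prime hgne, ← hg']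
      exact hJprime
    obtain ⟨i, j, hij, hi, hj⟩ := hI2 g hgprime.irreducible
    refine ⟨i, j, hij, ?_, ?_⟩
    · intro hdvd
      have hm : a i ∈ J := (hmem _).mpr hdvd
      rw [hg', Ideal.mem_span_singleton] at hm
      exact hi hm
    · intro hdvd
      have hm : a j ∈ J := (hmem _).mpr hdvd
      rw [hg', Ideal.mem_span_singleton] at hm
      exact hj hm

/-- Descent of balanced multisets from a finite extension. -/
lemma descent {F L : Type*} [Field F] [Field L] [Algebra F L] [FiniteDimensional F L]
    {n : ℕ} (a : Fin n → Polynomial F)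
    (hS : ∃ S : Multiset (Fin n → RatFunc L),
      IsBalanced (fun i => algebraMap (Polynomial L) (RatFunc L)
        ((a i).map (algebraMap F L))) S) :
    ∃ S : Multiset (Fin n → RatFunc F),
      IsBalanced (fun i => algebraMap (Polynomial F) (RatFunc F) (a i)) S := by
  classical
  obtain ⟨S, hSne, hrows, hcols⟩ := hS
  set φ : F →+* L := algebraMap F L with hφ
  set ψL : Polynomial L →+* RatFunc L := algebraMap (Polynomial L) (RatFunc L) with hψL
  set ψF : Polynomial F →+* RatFunc F := algebraMap (Polynomial F) (RatFunc F) with hψF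
  -- the induced ring hom between rational function fields
  have hnzd : nonZeroDivisors (Polynomial F) ≤
      Submonoid.comap (ψL.comp (Polynomial.mapRingHom φ)) (nonZeroDivisors (RatFunc L)) := by
    intro q hq
    have hqne : q ≠ 0 := nonZeroDivisors.ne_zero hq
    have hmapne : q.map φ ≠ 0 := by
      intro h0
      apply hqne
      apply Polynomial.map_injective φ (algebraMap F L).injective
      rw [Polynomial.map_zero]
      exact h0
    have : ψL (q.map φ) ≠ 0 := RatFunc.algebraMap_ne_zero hmapne
    exact mem_nonZeroDivisors_iff_ne_zero.mpr this
  set ι : RatFunc F →+* RatFunc L :=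
    RatFunc.liftRingHom (ψL.comp (Polynomial.mapRingHom φ)) hnzd with hι
  have hcompat : ∀ f : Polynomial F, ι (ψF f) = ψL (f.map φ) := by
    intro f
    have h1 : ψF f = ψF f / ψF 1 := by rw [map_one, div_one]
    rw [h1, hι, RatFunc.liftRingHom_apply_div]
    simp
  letI : Algebra (RatFunc F) (RatFunc L) := ι.toAlgebra
  have hsmul : ∀ (c : RatFunc F) (z : RatFunc L), c • z = ι c * z := fun c z => rfl
  -- span of a basis of L is everything
  set e : ℕ := Module.finrank F L with he
  set B : Module.Basis (Fin e) F L := Module.finBasis F L with hB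
  set θ : Fin e → RatFunc L := fun k => ψL (Polynomial.C (B k)) with hθ
  set V : Submodule (RatFunc F) (RatFunc L) := Submodule.span (RatFunc F) (Set.range θ) with hV
  have claim0 : ∀ x : L, ψL (Polynomial.C x) ∈ V := by
    intro x
    have hx : x = ∑ k, (B.repr x k) • B k := (B.sum_repr x).symm
    have h1 : ψL (Polynomial.C x)
        = ∑ k, (ψF (Polynomial.C (B.repr x k))) • θ k := by
      conv_lhs => rw [hx]
      rw [map_sum, map_sum]
      apply Finset.sum_congr rfl
      intro k _
      rw [hsmul, hcompat, Polynomial.map_C, hθ]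
      show ψL (Polynomial.C (B.repr x k • B k))
        = ψL (Polynomial.C (φ (B.repr x k))) * ψL (Polynomial.C (B k))
      rw [← map_mul, ← Polynomial.C_mul, hφ, ← Algebra.smul_def]
    rw [h1]
    apply Submodule.sum_mem
    intro k _
    exact Submodule.smul_mem _ _ (Submodule.subset_span ⟨k, rfl⟩)
  -- V is closed under multiplication
  have hmulmem : ∀ x ∈ V, ∀ y ∈ V, x * y ∈ V := by
    have hVV : V * V ≤ V := by
      rw [hV, Submodule.span_mul_span]
      rw [Submodule.span_le]
      rintro z ⟨z1, hz1, z2, hz2, rfl⟩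
      obtain ⟨k, rfl⟩ := hz1
      obtain ⟨l, rfl⟩ := hz2
      have : θ k * θ l = ψL (Polynomial.C (B k * B l)) := by
        rw [hθ, ← map_mul, ← Polynomial.C_mul]
      have h2 : (θ k) * (θ l) ∈ V := by rw [this]; exact claim0 _
      exact h2
    exact fun x hx y hy => Submodule.mul_le.mp hVV x hx y hy
  have h1V : (1 : RatFunc L) ∈ V := by
    have := claim0 1
    rwa [map_one, map_one] at this
  -- image of polynomials
  have hpoly : ∀ P : Polynomial L, ψL P ∈ V := by
    intro P
    induction P using Polynomial.induction_on' with
    | add p q hp hq =>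
      rw [map_add]
      exact Submodule.add_mem _ hp hq
    | monomial m x =>
      have hmon : (Polynomial.monomial m x : Polynomial L) = Polynomial.C x * Polynomial.X ^ m := by
        rw [Polynomial.C_mul_X_pow_eq_monomial]
      rw [hmon, map_mul]
      have hXpow : ψL (Polynomial.X ^ m) = ι (ψF (Polynomial.X ^ m)) := by
        rw [hcompat, Polynomial.map_pow, Polynomial.map_X]
      have : ψL (Polynomial.C x) * ψL (Polynomial.X ^ m)
          = (ψF (Polynomial.X ^ m)) • (ψL (Polynomial.C x)) := by
        show ψL (Polynomial.C x) * ψL (Polynomial.X ^ m)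
          = ι (ψF (Polynomial.X ^ m)) * (ψL (Polynomial.C x))
        rw [← hXpow]
        ring
      rw [this]
      exact Submodule.smul_mem _ _ (claim0 x)
  -- V is finite dimensional
  haveI hVfd : FiniteDimensional (RatFunc F) V := FiniteDimensional.span_of_finite _
    (Set.finite_range θ)
  -- V is closed under inverses
  have hinv : ∀ x : RatFunc L, x ∈ V → x ≠ 0 → x⁻¹ ∈ V := by
    intro x hx hxne
    set mx : V →ₗ[RatFunc F] V :=
      { toFun := fun y => ⟨x * (y : RatFunc L), hmulmem x hx _ y.2⟩
        map_add' := by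
          intro y z
          apply Subtype.ext
          show x * (↑y + ↑z) = x * ↑y + x * ↑z
          ring
        map_smul' := by
          intro c y
          apply Subtype.ext
          show x * (c • (y : RatFunc L)) = c • (x * (y : RatFunc L))
          rw [hsmul, hsmul]
          ring } with hmx
    have hinj : Function.Injective mx := by
      intro y z hyz
      have h2 : x * (y : RatFunc L) = x * (z : RatFunc L) := congrArg Subtype.val hyz
      exact Subtype.ext (mul_left_cancel₀ hxne h2)
    have hsurj := (LinearMap.injective_iff_surjective (f := mx)).mp hinj
    obtain ⟨y, hy⟩ := hsurj ⟨1, h1V⟩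
    have hy1 : x * (y : RatFunc L) = 1 := congrArg Subtype.val hy
    have : x⁻¹ = (y : RatFunc L) := by
      field_simp at hy1 ⊢
      rw [eq_comm] at hy1
      exact hy1
    rw [this]
    exact y.2
  -- V is everything
  have hVtop : ∀ z : RatFunc L, z ∈ V := by
    intro z
    have hz : z = ψL z.num * (ψL z.denom)⁻¹ := by
      rw [← div_eq_mul_inv]
      exact (RatFunc.num_div_denom z).symm
    rw [hz]
    exact hmulmem _ (hpoly _) _
      (hinv _ (hpoly _) (RatFunc.algebraMap_ne_zero (RatFunc.denom_ne_zero z)))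
  haveI hfin : Module.Finite (RatFunc F) (RatFunc L) := by
    refine ⟨⟨(Set.finite_range θ).toFinset, ?_⟩⟩
    rw [Set.Finite.coe_toFinset]
    rw [eq_top_iff]
    intro z _
    exact hVtop z
  -- coordinates with respect to a basis
  set e' : ℕ := Module.finrank (RatFunc F) (RatFunc L) with he'
  set Bb : Module.Basis (Fin e') (RatFunc F) (RatFunc L) := Module.finBasis (RatFunc F) (RatFunc L)
    with hBb
  -- build the descended multiset
  apply balanced_package (fun i => ψF (a i))
    (S.bind (fun v => (Finset.univ : Finset (Fin e')).val.map
      (fun k => fun i => Bb.repr (v i) k)))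
  · intro w hw
    rw [Multiset.mem_bind] at hw
    obtain ⟨v, hv, hw2⟩ := hw
    rw [Multiset.mem_map] at hw2
    obtain ⟨k, _, hkeq⟩ := hw2
    rw [← hkeq]
    have hterm : ∀ i : Fin n, ψF (a i) * Bb.repr (v i) k
        = Bb.repr ((ψF (a i)) • (v i)) k := by
      intro i
      rw [map_smul]
      rfl
    calc ∑ i, ψF (a i) * Bb.repr (v i) k
        = ∑ i, Bb.repr ((ψF (a i)) • (v i)) k := Finset.sum_congr rfl (fun i _ => hterm i)
      _ = Bb.repr (∑ i, (ψF (a i)) • (v i)) k := by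
          rw [map_sum]
          rw [Finsupp.finset_sum_apply]
      _ = Bb.repr 0 k := by
          congr 1
          have hsc : ∀ i : Fin n, (ψF (a i)) • (v i) = ψL ((a i).map φ) * v i := by
            intro i
            rw [hsmul, hcompat]
          rw [Finset.sum_congr rfl (fun i _ => hsc i)]
          exact congrArg Bb.repr ((hrows v hv).2)
      _ = 0 := by simp
  · intro j k
    have hcolbind : ∀ j : Fin n,
        Multiset.map (fun w : Fin n → RatFunc F => w j)
          (S.bind (fun v => (Finset.univ : Finset (Fin e')).val.map
            (fun k => fun i => Bb.repr (v i) k)))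
        = (S.map (fun v => v j)).bind
            (fun z => (Finset.univ : Finset (Fin e')).val.map (fun k => Bb.repr z k)) := by
      intro j
      rw [Multiset.map_bind, Multiset.bind_map]
      apply congrArg
      funext v
      rw [Multiset.map_map]
      rfl
    rw [hcolbind j, hcolbind k, hcols j k]
  · obtain ⟨v, hv⟩ := Multiset.exists_mem_of_ne_zero hSne
    obtain ⟨i, hi⟩ := Function.ne_iff.mp (hrows v hv).1
    have hrne : Bb.repr (v i) ≠ 0 := by
      intro h0
      apply hi
      have := Bb.repr.map_eq_zero_iff.mp h0
      exact this
    obtain ⟨k, hk⟩ : ∃ k, Bb.repr (v i) k ≠ 0 := by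
      by_contra hall
      push_neg at hall
      exact hrne (Finsupp.ext hall)
    refine ⟨fun i' => Bb.repr (v i') k, ?_, ?_⟩
    · rw [Multiset.mem_bind]
      exact ⟨v, hv, Multiset.mem_map.mpr ⟨k, Finset.mem_univ k, rfl⟩⟩
    · intro h0
      exact hk (congrFun h0 i)



/-- The sufficiency direction. -/
theorem sufficiency {F : Type*} [Field F] [Fintype F] {n : ℕ} (hn : 3 ≤ n)
    (a : Fin n → Polynomial F)
    (h1 : ∀ i, (a i).degree ≤ (Finset.univ.erase i).sup fun j => (a j).degree)
    (h2 : ∀ p : Polynomial F, Irreducible p →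
      (Finset.univ.filter fun i => p ∣ a i).card ≤ n - 2) :
    ∃ S : Multiset (Fin n → RatFunc F),
      IsBalanced (fun i => algebraMap (Polynomial F) (RatFunc F) (a i)) S := by
  classical
  have hn0 : 0 < n := by omega
  -- condition (I2) over F
  have hI2F : ∀ p : Polynomial F, Irreducible p →
      ∃ i j : Fin n, i ≠ j ∧ ¬ p ∣ a i ∧ ¬ p ∣ a j := by
    intro p hp
    have hcards := Finset.card_filter_add_card_filter_not
      (s := (Finset.univ : Finset (Fin n))) (p := fun i => p ∣ a i)
    have hcard2 : 1 < (Finset.univ.filter fun i => ¬ p ∣ a i).card := by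
      have := h2 p hp
      have hu : (Finset.univ : Finset (Fin n)).card = n := by
        rw [Finset.card_univ, Fintype.card_fin]
      omega
    obtain ⟨i, hi, j, hj, hij⟩ := Finset.one_lt_card.mp hcard2
    exact ⟨i, j, hij, (Finset.mem_filter.mp hi).2, (Finset.mem_filter.mp hj).2⟩
  -- the big field
  set q : ℕ := Fintype.card F with hq
  set m : ℕ := q ^ (n + 1) with hm
  set f : Polynomial F := Polynomial.X ^ m - Polynomial.X with hf
  set L := f.SplittingField with hL
  haveI : FiniteDimensional F L := Polynomial.IsSplittingField.finiteDimensional L f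
  haveI : Finite L := Module.finite_of_finite F
  haveI : Fintype L := Fintype.ofFinite L
  have hq2 : 2 ≤ q := Fintype.one_lt_card
  have hm2 : 2 ≤ m := by
    calc 2 = 2 ^ 1 := by norm_num
      _ ≤ 2 ^ (n + 1) := Nat.pow_le_pow_right (by norm_num) (by omega)
      _ ≤ q ^ (n + 1) := Nat.pow_le_pow_left hq2 _
  have hnm : n < m := by
    calc n < 2 ^ (n + 1) := by
          have := Nat.lt_two_pow_self (n := n)
          have h2 : (2:ℕ) ^ n ≤ 2 ^ (n+1) := Nat.pow_le_pow_right (by norm_num) (by omega)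
          omega
      _ ≤ q ^ (n + 1) := Nat.pow_le_pow_left hq2 _
  -- degree of f
  have hdegf : f.degree = (m : WithBot ℕ) := by
    rw [hf]
    rw [Polynomial.degree_sub_eq_left_of_degree_lt]
    · exact Polynomial.degree_X_pow m
    · rw [Polynomial.degree_X_pow, Polynomial.degree_X]
      exact_mod_cast by omega
  have hfne : f ≠ 0 := by
    intro h0
    rw [h0, Polynomial.degree_zero] at hdegf
    exact absurd hdegf.symm (by simp)
  have hnatdegf : f.natDegree = m := Polynomial.natDegree_eq_of_degree_eq_some hdegf
  -- separability
  have hsep : f.Separable := by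
    rw [Polynomial.separable_def]
    have hder : Polynomial.derivative f = -1 := by
      rw [hf, Polynomial.derivative_sub, Polynomial.derivative_X_pow, Polynomial.derivative_X]
      have hcast : ((m : F)) = 0 := by
        rw [hm]
        push_cast
        rw [FiniteField.cast_card_eq_zero]
        rw [zero_pow (by omega)]
      rw [hcast, Polynomial.C_0, zero_mul, zero_sub]
    rw [hder]
    exact ⟨0, -1, by ring⟩
  -- cardinality bound
  have hcardL : n < Fintype.card L := by
    set fL := f.map (algebraMap F L) with hfL
    have hsepL : fL.Separable := hsep.map
    have hsplitL : Polynomial.Splits fL :=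
      Polynomial.SplittingField.splits f
    have hroots : Multiset.card fL.roots = m := by
      rw [Polynomial.splits_iff_card_roots.mp hsplitL, hfL, Polynomial.natDegree_map, hnatdegf]
    have hnodup : fL.roots.Nodup := Polynomial.nodup_roots hsepL
    have hcard3 : fL.roots.toFinset.card = m := by
      rw [Multiset.toFinset_card_of_nodup hnodup, hroots]
    calc n < m := hnm
      _ = fL.roots.toFinset.card := hcard3.symm
      _ ≤ Fintype.card L := Finset.card_le_univ _
  -- transported data
  set b : Fin n → Polynomial L := fun i => (a i).map (algebraMap F L) with hb
  have hI2L : ∀ p : Polynomial L, Irreducible p →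
      ∃ i j : Fin n, i ≠ j ∧ ¬ p ∣ b i ∧ ¬ p ∣ b j :=
    fun p hp => transport_I2 (algebraMap F L) a hI2F p hp
  have hI3L : ∀ i, (b i).degree ≤ (Finset.univ.erase i).sup fun j => (b j).degree := by
    intro i
    have hdm : ∀ i : Fin n, (b i).degree = (a i).degree := by
      intro i
      rw [hb]
      exact Polynomial.degree_map _ _
    rw [hdm]
    calc (a i).degree ≤ (Finset.univ.erase i).sup fun j => (a j).degree := h1 i
      _ = (Finset.univ.erase i).sup fun j => (b j).degree := by
          apply Finset.sup_congr rfl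
          intro j _
          exact (hdm j).symm
  obtain ⟨S, hS⟩ := main_construction hn0 hcardL b hI2L hI3L
  exact descent a ⟨S, hS⟩

end SmythAux

theorem smyth_conjecture_Fqt (F : Type*) [Field F] [Fintype F] (n : ℕ) (hn : 3 ≤ n)
    (a : Fin n → Polynomial F) (hcop : Ideal.span (Set.range a) = ⊤) :
    (∃ S : Multiset (Fin n → RatFunc F),
        IsBalanced (fun i => algebraMap (Polynomial F) (RatFunc F) (a i)) S) ↔
      ((∀ i, (a i).degree ≤ (Finset.univ.erase i).sup fun j => (a j).degree) ∧
        ∀ p : Polynomial F, Irreducible p →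
          (Finset.univ.filter fun i => p ∣ a i).card ≤ n - 2) := by
  constructor
  · rintro ⟨S, hS⟩
    obtain ⟨T, hT, hrows, hcols⟩ := SmythAux.clear_denominators a S hS
    exact ⟨fun i => SmythAux.necessity_deg a T hT hrows hcols i,
           fun p hp => SmythAux.necessity_div hn a hcop T hT hrows hcols p hp⟩
  · rintro ⟨h1, h2⟩
    exact SmythAux.sufficiency hn a h1 h2
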